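/- Let (V, ⟨·,·⟩) be a finite-dimensional quadratic vector space. The generalized first prolongation so(V)^⟨1⟩, defined as the kernel of the map ∂: V* ⊗ so(V) → Λ³V* given by (∂α)(u,v,w) = Σ_cyclic ⟨α_u v, w⟩, equals the image of the map alt: Sym²V* ⊗ V* → V* ⊗ so(V) defined by ⟨alt(σ)_u v, w⟩ = σ(u,v,w) − σ(u,w,v); consequently so(V)^⟨1⟩ is isomorphic to (Sym²V ⊗ V)/Sym³V. -/
import Mathlib


/-!
STATEMENT 5: Let `(V, ⟨·,·⟩)` be a finite-dimensional quadratic vector space (`B` symmetric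
nondegenerate).  An element of `V* ⊗ so(V)` is encoded as a bilinear map
`A : V →ₗ V →ₗ V` with each `A u` skew-symmetric for `B`.  The generalized first
prolongation `so(V)^⟨1⟩ = ker ∂`, where `(∂A)(u,v,w) = Σ_cyclic ⟨A_u v, w⟩`, equals the image
of `alt : Sym²V* ⊗ V* → V* ⊗ so(V)`, `⟨alt(σ)_u v, w⟩ = σ(u,v,w) − σ(u,w,v)` (with `σ` a
trilinear form symmetric in its first two arguments).
-/
theorem generalized_first_prolongation_eq_image_alt
    {V : Type*} [AddCommGroup V] [Module ℝ V] [FiniteDimensional ℝ V]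
    (B : V →ₗ[ℝ] V →ₗ[ℝ] ℝ)
    (hsymm : ∀ u v, B u v = B v u)
    (hnd : ∀ u, (∀ v, B u v = 0) → u = 0)
    (A : V →ₗ[ℝ] V →ₗ[ℝ] V)
    (hskew : ∀ u v w, B (A u v) w = - B v (A u w)) :
    (∀ u v w, B (A u v) w + B (A v w) u + B (A w u) v = 0) ↔
      ∃ σ : V →ₗ[ℝ] V →ₗ[ℝ] V →ₗ[ℝ] ℝ,
        (∀ u v, σ u v = σ v u) ∧
        ∀ u v w, B (A u v) w = σ u v w - σ u w v := by
  -- T(u,v,w) := B (A u v) w is skew in (v,w)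
  have hT : ∀ u v w, B (A u v) w = - B (A u w) v := by
    intro u v w
    rw [hskew u v w, hsymm]
  constructor
  · intro h
    refine ⟨LinearMap.mk₂ ℝ (fun u v => (3 : ℝ)⁻¹ • (B (A u v) + B (A v u)))
      ?_ ?_ ?_ ?_, ?_, ?_⟩
    · intro u u' v
      simp only [map_add, LinearMap.add_apply]
      module
    · intro c u v
      simp only [map_smul, LinearMap.smul_apply]
      module
    · intro u v v'
      simp only [map_add, LinearMap.add_apply]
      module
    · intro u c v
      simp only [map_smul, LinearMap.smul_apply]
      module
    · intro u v
      ext w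
      simp only [LinearMap.mk₂_apply, LinearMap.smul_apply, LinearMap.add_apply,
        smul_eq_mul]
      ring
    · intro u v w
      simp only [LinearMap.mk₂_apply, LinearMap.smul_apply, LinearMap.add_apply,
        smul_eq_mul]
      have h1 := h u v w
      have h2 := h u w v
      have e1 := hT u v w
      have e2 := hT v u w
      have e3 := hT w u v
      have e4 : B (A v w) u = - B (A v u) w := hT v w u
      have e5 : B (A w u) v = - B (A w v) u := hT w u v
      linarith
  · rintro ⟨σ, hs, hσ⟩ u v w
    have s1 : σ u v w = σ v u w := by rw [hs]
    have s2 : σ v w u = σ w v u := by rw [hs]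
    have s3 : σ w u v = σ u w v := by rw [hs]
    rw [hσ u v w, hσ v w u, hσ w u v]
    linarith
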